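/- For a graph G with at least one edge that contains no bridges and no loops, the polynomial χ_G(0,t) is nonzero. -/

import Mathlib

/-- A finite multigraph: vertices, edges, and an endpoint map allowing loops
and parallel edges. -/
structure Multigraph where
  V : Type
  E : Type
  [fintypeV : Fintype V]
  [fintypeE : Fintype E]
  [decEqV : DecidableEq V]
  [decEqE : DecidableEq E]
  ends : E → Sym2 V

attribute [instance] Multigraph.fintypeV Multigraph.fintypeE
  Multigraph.decEqV Multigraph.decEqE

namespace Multigraph

/-- The simple graph on `G.V` whose adjacency is induced by the edges in `H`. -/
def sg (G : Multigraph) (H : Finset G.E) : SimpleGraph G.V :=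
  SimpleGraph.fromRel (fun x y => ∃ e ∈ H, G.ends e = s(x, y))

/-- Number of connected components of the spanning subgraph `G|H`. -/
noncomputable def k (G : Multigraph) (H : Finset G.E) : ℕ :=
  Nat.card (G.sg H).ConnectedComponent

/-- The Tutte polynomial of `G` (via the Whitney rank / subset expansion, which is
the closed form of the deletion-contraction recursion), evaluated at `x`, `y`.
Here `k A - k univ = r(E) - r(A)` and `A.card + k A - card V = |A| - r(A)`. -/
noncomputable def tutteEval (G : Multigraph) {R : Type} [CommRing R] (x y : R) : R :=
  ∑ A : Finset G.E,
    (x - 1) ^ (G.k A - G.k Finset.univ) *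
      (y - 1) ^ (A.card + G.k A - Fintype.card G.V)

/-- A loop is an edge joining a vertex to itself. -/
def IsLoop (G : Multigraph) (e : G.E) : Prop := (G.ends e).IsDiag

/-- `e ∈ H` is a bridge of the spanning subgraph `G|H`: deleting it changes
(necessarily increases) the number of connected components. -/
def IsBridgeIn (G : Multigraph) (H : Finset G.E) (e : G.E) : Prop :=
  G.k (H.erase e) ≠ G.k H

/-- `e` is contained in a cycle of `G|H`: it is a loop (a cycle of length one) or its two
(distinct) endpoints remain connected after deleting it. -/
def MemCycle (G : Multigraph) (H : Finset G.E) (e : G.E) : Prop :=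
  ∃ x y, G.ends e = s(x, y) ∧ (x = y ∨ (G.sg (H.erase e)).Reachable x y)

/-- `G|H`: restriction (spanning subgraph) to the edges of `H`. -/
def restrict (G : Multigraph) (H : Finset G.E) : Multigraph where
  V := G.V
  E := {e : G.E // e ∈ H}
  ends := fun e => G.ends e.1

/-- `G/H`: contraction of all the edges of `H`. -/
noncomputable def contract (G : Multigraph) (H : Finset G.E) : Multigraph where
  V := (G.sg H).ConnectedComponent
  E := {e : G.E // e ∉ H}
  fintypeV := Fintype.ofFinite _
  decEqV := Classical.decEq _
  ends := fun e => (G.ends e.1).map (SimpleGraph.connectedComponentMk (G.sg H))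

end Multigraph

open Multigraph


namespace TutteAux
open Finset

/-- Any walk in a graph whose adjacency exceeds `G`'s only by the pair `{u, v}`
yields reachability info in `G`. -/
lemma walk_cases {V : Type} {G G' : SimpleGraph V} {u v : V}
    (hadj : ∀ x y, G'.Adj x y → G.Adj x y ∨ (x = u ∧ y = v) ∨ (x = v ∧ y = u)) :
    ∀ {x y : V}, G'.Walk x y →
      G.Reachable x y ∨ G.Reachable x u ∨ G.Reachable x v := by
  intro x y p
  induction p with
  | nil => exact Or.inl (SimpleGraph.Reachable.refl _)
  | @cons a b c h p ih =>
    rcases hadj _ _ h with h' | ⟨rfl, rfl⟩ | ⟨rfl, rfl⟩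
    · rcases ih with h2 | h2 | h2
      · exact Or.inl ((SimpleGraph.Adj.reachable h').trans h2)
      · exact Or.inr (Or.inl ((SimpleGraph.Adj.reachable h').trans h2))
      · exact Or.inr (Or.inr ((SimpleGraph.Adj.reachable h').trans h2))
    · exact Or.inr (Or.inl (SimpleGraph.Reachable.refl _))
    · exact Or.inr (Or.inr (SimpleGraph.Reachable.refl _))

/-- Adding one edge decreases the number of connected components by at most one. -/
lemma card_cc_le {V : Type} [Fintype V] {G G' : SimpleGraph V} {u v : V} (hle : G ≤ G')
    (hadj : ∀ x y, G'.Adj x y → G.Adj x y ∨ (x = u ∧ y = v) ∨ (x = v ∧ y = u)) :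
    Nat.card G.ConnectedComponent ≤ Nat.card G'.ConnectedComponent + 1 := by
  classical
  set φ : G.ConnectedComponent → G'.ConnectedComponent :=
    SimpleGraph.ConnectedComponent.map (SimpleGraph.Hom.ofLE hle) with hφ
  have key : ∀ c d, φ c = φ d →
      c = d ∨ c = G.connectedComponentMk u ∨ c = G.connectedComponentMk v := by
    refine SimpleGraph.ConnectedComponent.ind₂ ?_
    intro x y hxy
    simp only [hφ, SimpleGraph.ConnectedComponent.map_mk,
      SimpleGraph.Hom.ofLE_apply, SimpleGraph.ConnectedComponent.eq] at hxy
    obtain ⟨p⟩ := hxy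
    rcases walk_cases hadj p with h | h | h
    · exact Or.inl (SimpleGraph.ConnectedComponent.sound h)
    · exact Or.inr (Or.inl (SimpleGraph.ConnectedComponent.sound h))
    · exact Or.inr (Or.inr (SimpleGraph.ConnectedComponent.sound h))
  have hinj : Function.Injective
      (fun c : {c : G.ConnectedComponent // c ≠ G.connectedComponentMk u} => φ c.1) := by
    rintro ⟨c, hc⟩ ⟨d, hd⟩ h
    simp only at h
    rcases key c d h with h1 | h1 | h1
    · exact Subtype.ext h1
    · exact absurd h1 hc
    · rcases key d c h.symm with h2 | h2 | h2
      · exact Subtype.ext h2.symm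
      · exact absurd h2 hd
      · exact Subtype.ext (h1.trans h2.symm)
  have h1 : Nat.card {c : G.ConnectedComponent // c ≠ G.connectedComponentMk u}
      ≤ Nat.card G'.ConnectedComponent := Nat.card_le_card_of_injective _ hinj
  have h2 : Nat.card G.ConnectedComponent ≤
      Nat.card {c : G.ConnectedComponent // c ≠ G.connectedComponentMk u} + 1 := by
    have hft := Fintype.ofFinite G.ConnectedComponent
    have h3 := Fintype.card_subtype_compl (fun c : G.ConnectedComponent =>
      c = G.connectedComponentMk u)
    rw [Fintype.card_subtype_eq] at h3
    rw [← Nat.card_eq_fintype_card, ← Nat.card_eq_fintype_card] at h3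
    simp only [ne_eq]
    have h4 : 1 ≤ Nat.card G.ConnectedComponent := Nat.one_le_iff_ne_zero.mpr
      (Nat.card_ne_zero.mpr ⟨⟨G.connectedComponentMk u⟩, inferInstance⟩)
    omega
  omega

lemma k_le_k_insert_add_one (G : Multigraph) (e : G.E) (A : Finset G.E) :
    G.k A ≤ G.k (insert e A) + 1 := by
  classical
  obtain ⟨u, v, huv⟩ : ∃ u v, G.ends e = s(u, v) := by
    have : ∀ z : Sym2 G.V, ∃ u v, z = s(u, v) := by
      intro z
      induction z using Sym2.ind with
      | _ x y => exact ⟨x, y, rfl⟩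
    exact this _
  have hle : G.sg A ≤ G.sg (insert e A) := by
    intro a b hab
    simp only [Multigraph.sg, SimpleGraph.fromRel_adj] at hab ⊢
    obtain ⟨hne, h⟩ := hab
    refine ⟨hne, ?_⟩
    rcases h with ⟨f, hf, h⟩ | ⟨f, hf, h⟩
    · exact Or.inl ⟨f, mem_insert_of_mem hf, h⟩
    · exact Or.inr ⟨f, mem_insert_of_mem hf, h⟩
  have hadj : ∀ x y, (G.sg (insert e A)).Adj x y →
      (G.sg A).Adj x y ∨ (x = u ∧ y = v) ∨ (x = v ∧ y = u) := by
    intro x y hxy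
    simp only [Multigraph.sg, SimpleGraph.fromRel_adj] at hxy
    obtain ⟨hne, h⟩ := hxy
    have h' : ∃ f ∈ insert e A, G.ends f = s(x, y) := by
      rcases h with ⟨f, hf, h⟩ | ⟨f, hf, h⟩
      · exact ⟨f, hf, h⟩
      · exact ⟨f, hf, by rw [h, Sym2.eq_swap]⟩
    obtain ⟨f, hf, hfxy⟩ := h'
    rcases Finset.mem_insert.mp hf with rfl | hfA
    · rw [huv] at hfxy
      rcases Sym2.eq_iff.mp hfxy with ⟨rfl, rfl⟩ | ⟨rfl, rfl⟩
      · exact Or.inr (Or.inl ⟨rfl, rfl⟩)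
      · exact Or.inr (Or.inr ⟨rfl, rfl⟩)
    · refine Or.inl ?_
      simp only [Multigraph.sg, SimpleGraph.fromRel_adj]
      exact ⟨hne, Or.inl ⟨f, hfA, hfxy⟩⟩
  exact card_cc_le hle hadj

lemma k_empty (G : Multigraph) : G.k ∅ = Fintype.card G.V := by
  have hbot : G.sg ∅ = ⊥ := by
    ext x y
    simp [Multigraph.sg, SimpleGraph.fromRel_adj]
  rw [Multigraph.k, hbot]
  have hb : Function.Bijective ((⊥ : SimpleGraph G.V).connectedComponentMk) := by
    constructor
    · intro x y h
      exact SimpleGraph.reachable_bot.mp (SimpleGraph.ConnectedComponent.exact h)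
    · exact SimpleGraph.ConnectedComponent.ind (fun w => ⟨w, rfl⟩)
  rw [← Nat.card_eq_fintype_card]
  exact (Nat.card_eq_of_bijective _ hb).symm

lemma card_add_k_mono (G : Multigraph) : ∀ {A B : Finset G.E}, A ⊆ B →
    A.card + G.k A ≤ B.card + G.k B := by
  intro A B hAB
  generalize hn : (B \ A).card = m
  induction m generalizing A with
  | zero =>
    have hBA : B \ A = ∅ := Finset.card_eq_zero.mp hn
    have : A = B :=
      Finset.Subset.antisymm hAB (Finset.sdiff_eq_empty_iff_subset.mp hBA)
    rw [this]
  | succ m ih =>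
    have hne : (B \ A).Nonempty := by
      rw [← Finset.card_pos, hn]; omega
    obtain ⟨e, he⟩ := hne
    obtain ⟨heB, heA⟩ := Finset.mem_sdiff.mp he
    have hsub : insert e A ⊆ B := Finset.insert_subset heB hAB
    have hcard : (B \ insert e A).card = m := by
      rw [Finset.sdiff_insert, Finset.card_erase_of_mem he, hn]
      omega

    have h1 := ih hsub hcard
    have h2 := k_le_k_insert_add_one G e A
    rw [Finset.card_insert_of_notMem heA] at h1
    omega

end TutteAux

open TutteAux in
/-- For a graph `G` with at least one edge containing no bridges and no loops,
the polynomial `χ_G(0, t)` is nonzero. -/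
theorem tutte_eval_ne_zero (G : Multigraph) (hE : Nonempty G.E)
    (hbridge : ∀ e, ¬ G.IsBridgeIn Finset.univ e) (hloop : ∀ e, ¬ G.IsLoop e) :
    G.tutteEval (0 : Polynomial ℤ) Polynomial.X ≠ 0 := by
  classical
  have hVle : ∀ A : Finset G.E, Fintype.card G.V ≤ A.card + G.k A := by
    intro A
    have h := card_add_k_mono G (Finset.empty_subset A)
    rwa [Finset.card_empty, k_empty, zero_add] at h
  have hlt : ∀ A : Finset G.E, A ≠ Finset.univ →
      A.card + G.k A < Fintype.card G.E + G.k Finset.univ := by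
    intro A hA
    obtain ⟨e, heA⟩ : ∃ e, e ∉ A := by
      by_contra h
      push_neg at h
      exact hA (Finset.eq_univ_iff_forall.mpr h)
    have hsub : A ⊆ Finset.univ.erase e := fun x hx =>
      Finset.mem_erase.mpr ⟨fun hxe => heA (hxe ▸ hx), Finset.mem_univ x⟩
    have h1 := card_add_k_mono G hsub
    have h2 : G.k (Finset.univ.erase e) = G.k Finset.univ := not_ne_iff.mp (hbridge e)
    have h3 : (Finset.univ.erase e : Finset G.E).card = Fintype.card G.E - 1 := by
      rw [Finset.card_erase_of_mem (Finset.mem_univ e), Finset.card_univ]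
    have h4 : 1 ≤ Fintype.card G.E := Fintype.card_pos
    rw [h2, h3] at h1
    omega
  set n := Fintype.card G.E + G.k Finset.univ - Fintype.card G.V with hn
  intro h0
  have h1 : (G.tutteEval (0 : Polynomial ℤ) Polynomial.X).coeff n = 1 := by
    unfold Multigraph.tutteEval
    rw [Polynomial.finset_sum_coeff]
    rw [Finset.sum_eq_single Finset.univ]
    · rw [Nat.sub_self, pow_zero, one_mul, Finset.card_univ, ← hn]
      have hX : (Polynomial.X - 1 : Polynomial ℤ) = Polynomial.X - Polynomial.C 1 := by
        rw [Polynomial.C_1]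
      rw [hX]
      have hmon : ((Polynomial.X - Polynomial.C (1 : ℤ)) ^ n).Monic :=
        (Polynomial.monic_X_sub_C 1).pow n
      have hdeg : ((Polynomial.X - Polynomial.C (1 : ℤ)) ^ n).natDegree = n := by
        rw [(Polynomial.monic_X_sub_C (1 : ℤ)).natDegree_pow, Polynomial.natDegree_X_sub_C,
          mul_one]
      have hc := hmon.coeff_natDegree
      rwa [hdeg] at hc
    · intro A _ hA
      apply Polynomial.coeff_eq_zero_of_natDegree_lt
      have hmlt : A.card + G.k A - Fintype.card G.V < n :=
        Nat.sub_lt_sub_right (hVle A) (hlt A hA)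
      calc (((0 : Polynomial ℤ) - 1) ^ (G.k A - G.k Finset.univ) *
            (Polynomial.X - 1) ^ (A.card + G.k A - Fintype.card G.V)).natDegree
          ≤ (((0 : Polynomial ℤ) - 1) ^ (G.k A - G.k Finset.univ)).natDegree +
            ((Polynomial.X - 1 : Polynomial ℤ) ^
              (A.card + G.k A - Fintype.card G.V)).natDegree :=
            Polynomial.natDegree_mul_le
        _ ≤ 0 + (A.card + G.k A - Fintype.card G.V) := by
            gcongr
            · rw [zero_sub]
              have : ((-1 : Polynomial ℤ) ^ (G.k A - G.k Finset.univ)).natDegree = 0 := by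
                rw [← Polynomial.C_1, ← map_neg, ← map_pow, Polynomial.natDegree_C]
              omega
            · have hX : (Polynomial.X - 1 : Polynomial ℤ) = Polynomial.X - Polynomial.C 1 := by
                rw [Polynomial.C_1]
              rw [hX, (Polynomial.monic_X_sub_C (1 : ℤ)).natDegree_pow,
                Polynomial.natDegree_X_sub_C, mul_one]
        _ < n := by omega
    · intro h
      exact absurd (Finset.mem_univ _) h
  rw [h0, Polynomial.coeff_zero] at h1
  exact absurd h1 (by norm_num)
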